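/- Let (X, α) be a partial dynamical system with Δ₋₁ open. The map α̃ : Δ̃₁ → Δ̃₋₁ defined by α̃(x₀, x₁, ...) = (α(x₀), x₀, x₁, ...) is a homeomorphism from Δ̃₁ = {(x₀,...) ∈ X̃ : x₀ ∈ Δ₁} onto Δ̃₋₁ = {(x₀, x₁, ...) ∈ X̃ : x₁ ≠ 0}, with inverse α̃⁻¹(x₀, x₁, x₂, ...) = (x₁, x₂, ...). Moreover Φ ∘ α̃ = α ∘ Φ on Δ̃₁. -/

import Mathlib

open Set

variable {X : Type*}

/-- `pdsDom α Δ n` is the domain `Δₙ` of the `n`-th iterate of the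
partial map `α : Δ → X`. -/
def pdsDom (α : X → X) (Δ : Set X) : ℕ → Set X
  | 0 => Set.univ
  | n + 1 => Δ ∩ α ⁻¹' pdsDom α Δ n

/-- The point `0` adjoined to `X`: we realize `X ∪ {0}` as `X ⊕ Unit`,
with `0 := Sum.inr ()`. -/
abbrev pdsZero (X : Type*) : X ⊕ Unit := Sum.inr ()

/-- The set `X_∞` of infinite anti-orbits of `(X, α)`, inside the
product `∏_{n ∈ ℕ} (X ∪ {0})`. -/
def XInf (α : X → X) (Δ : Set X) : Set (ℕ → X ⊕ Unit) :=
  {p | (∀ n, ∃ x, p n = Sum.inl x ∧ x ∈ pdsDom α Δ n) ∧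
       (∀ n x, p (n + 1) = Sum.inl x → x ∈ Δ ∧ p n = Sum.inl (α x))}

/-- The set `X_N` of anti-orbits of length exactly `N`: sequences
`(x₀, …, x_N, 0, 0, …)` with `xₙ ∈ Δₙ`, `α xₙ = x_{n-1}` and `x_N ∉ α(Δ)`. -/
def XN (α : X → X) (Δ : Set X) (N : ℕ) : Set (ℕ → X ⊕ Unit) :=
  {p | (∀ n ≤ N, ∃ x, p n = Sum.inl x ∧ x ∈ pdsDom α Δ n) ∧
       (∀ n, N < n → p n = pdsZero X) ∧
       (∀ n x, p (n + 1) = Sum.inl x → x ∈ Δ ∧ p n = Sum.inl (α x)) ∧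
       (∀ x, p N = Sum.inl x → x ∉ α '' Δ)}

/-- The `α`-extension `X̃ = ⋃_N X_N ∪ X_∞` of `X`. -/
def Xtilde (α : X → X) (Δ : Set X) : Set (ℕ → X ⊕ Unit) :=
  (⋃ N, XN α Δ N) ∪ XInf α Δ

/-- The map `α̃ : (x₀, x₁, …) ↦ (α x₀, x₀, x₁, …)` on sequences. -/
def tShift (α : X → X) : (ℕ → X ⊕ Unit) → (ℕ → X ⊕ Unit) :=
  fun p n => Nat.casesOn n (Sum.map α id (p 0)) fun k => p k

/-- The backwards shift `(x₀, x₁, x₂, …) ↦ (x₁, x₂, …)`. -/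
def bShift : (ℕ → X ⊕ Unit) → (ℕ → X ⊕ Unit) := fun p n => p (n + 1)

/-- The domain `Δ̃₁ = {x̃ ∈ X̃ : x₀ ∈ Δ₁}` of `α̃`. -/
def tDelta1 (α : X → X) (Δ : Set X) : Set (ℕ → X ⊕ Unit) :=
  {p | p ∈ Xtilde α Δ ∧ ∃ x ∈ Δ, p 0 = Sum.inl x}

/-- The image `Δ̃₋₁ = {x̃ ∈ X̃ : x₁ ≠ 0}` of `α̃`. -/
def tDeltaM1 (α : X → X) (Δ : Set X) : Set (ℕ → X ⊕ Unit) :=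
  {p | p ∈ Xtilde α Δ ∧ p 1 ≠ pdsZero X}

/-- `V` is invariant under the partial map `α : Δ → X`:
`αⁿ(V ∩ Δₙ) = V ∩ Δ₋ₙ` for all `n ∈ ℕ`. -/
def PdsInvariant (α : X → X) (Δ : Set X) (V : Set X) : Prop :=
  ∀ n : ℕ, α^[n] '' (V ∩ pdsDom α Δ n) = V ∩ α^[n] '' pdsDom α Δ n

/-- The set `Fₙ = {x ∈ Δₙ : αⁿ x = x}` of `n`-periodic points. -/
def pdsFix (α : X → X) (Δ : Set X) (n : ℕ) : Set X :=
  {x | x ∈ pdsDom α Δ n ∧ α^[n] x = x}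

/-- Topological freedom of the partial map `α : Δ → X`: for every `n > 0`,
every nonempty relatively open subset of `Fₙ` contains a point `x` with
`|α⁻ᵏ(x)| > 1` for some `1 ≤ k ≤ n`. -/
def TopFree [TopologicalSpace X] (α : X → X) (Δ : Set X) : Prop :=
  ∀ n : ℕ, 0 < n → ∀ W : Set X, IsOpen W → (W ∩ pdsFix α Δ n).Nonempty →
    ∃ x ∈ W ∩ pdsFix α Δ n, ∃ k, 1 ≤ k ∧ k ≤ n ∧
      ∃ y z, y ∈ pdsDom α Δ k ∧ z ∈ pdsDom α Δ k ∧
        α^[k] y = x ∧ α^[k] z = x ∧ y ≠ z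

lemma pdsDom_succ_subset (α : X → X) (Δ : Set X) :
    ∀ n, pdsDom α Δ (n + 1) ⊆ pdsDom α Δ n
  | 0 => fun x _ => Set.mem_univ x
  | n + 1 => fun x hx => ⟨hx.1, pdsDom_succ_subset α Δ n hx.2⟩

lemma mem_pdsDom_succ {α : X → X} {Δ : Set X} {p : ℕ → X ⊕ Unit}
    (hrec : ∀ n x, p (n + 1) = Sum.inl x → x ∈ Δ ∧ p n = Sum.inl (α x))
    {x₀ : X} (h0 : p 0 = Sum.inl x₀) (hx0 : x₀ ∈ Δ) :
    ∀ n y, p n = Sum.inl y → y ∈ pdsDom α Δ (n + 1) := by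
  intro n
  induction n with
  | zero =>
    intro y hy
    have : Sum.inl y = (Sum.inl x₀ : X ⊕ Unit) := hy ▸ h0
    cases Sum.inl.inj this
    exact ⟨hx0, Set.mem_univ _⟩
  | succ n ih =>
    intro y hy
    obtain ⟨hyΔ, hpn⟩ := hrec n y hy
    exact ⟨hyΔ, ih _ hpn⟩

lemma tShift_mem_tDeltaM1 {α : X → X} {Δ : Set X} {p : ℕ → X ⊕ Unit}
    (hp : p ∈ tDelta1 α Δ) : tShift α p ∈ tDeltaM1 α Δ := by
  obtain ⟨hpX, x, hxΔ, hp0⟩ := hp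
  have hq0 : tShift α p 0 = Sum.inl (α x) := by simp [tShift, hp0]
  have hqs : ∀ n, tShift α p (n + 1) = p n := fun n => rfl
  have hq1 : tShift α p 1 ≠ pdsZero X := by
    rw [hqs 0, hp0]; exact fun h => Sum.inl_ne_inr h
  refine ⟨?_, hq1⟩
  rcases hpX with hN | hInf
  · obtain ⟨N, h1, h2, h3, h4⟩ := Set.mem_iUnion.1 hN
    have hdom := mem_pdsDom_succ h3 hp0 hxΔ
    refine Or.inl (Set.mem_iUnion.2 ⟨N + 1, ?_, ?_, ?_, ?_⟩)
    · intro n hn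
      cases n with
      | zero => exact ⟨α x, hq0, Set.mem_univ _⟩
      | succ m =>
        obtain ⟨y, hy, _⟩ := h1 m (Nat.le_of_succ_le_succ hn)
        exact ⟨y, (hqs m).trans hy, hdom m y hy⟩
    · intro n hn
      cases n with
      | zero => omega
      | succ m => exact (hqs m).trans (h2 m (by omega))
    · intro n y hy
      cases n with
      | zero =>
        rw [hqs 0, hp0] at hy
        cases Sum.inl.inj hy
        exact ⟨hxΔ, hq0⟩
      | succ m =>
        obtain ⟨hyΔ, hpm⟩ := h3 m y ((hqs (m + 1)).symm.trans hy)
        exact ⟨hyΔ, (hqs m).trans hpm⟩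
    · intro y hy
      exact h4 y ((hqs N).symm.trans hy)
  · obtain ⟨h1, h3⟩ := hInf
    have hdom := mem_pdsDom_succ h3 hp0 hxΔ
    refine Or.inr ⟨?_, ?_⟩
    · intro n
      cases n with
      | zero => exact ⟨α x, hq0, Set.mem_univ _⟩
      | succ m =>
        obtain ⟨y, hy, _⟩ := h1 m
        exact ⟨y, (hqs m).trans hy, hdom m y hy⟩
    · intro n y hy
      cases n with
      | zero =>
        rw [hqs 0, hp0] at hy
        cases Sum.inl.inj hy
        exact ⟨hxΔ, hq0⟩
      | succ m =>
        obtain ⟨hyΔ, hpm⟩ := h3 m y ((hqs (m + 1)).symm.trans hy)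
        exact ⟨hyΔ, (hqs m).trans hpm⟩

lemma bShift_mem_tDelta1 {α : X → X} {Δ : Set X} {p : ℕ → X ⊕ Unit}
    (hp : p ∈ tDeltaM1 α Δ) : bShift p ∈ tDelta1 α Δ := by
  obtain ⟨hpX, hp1⟩ := hp
  have hrec : ∀ n x, p (n + 1) = Sum.inl x → x ∈ Δ ∧ p n = Sum.inl (α x) := by
    rcases hpX with hN | hInf
    · obtain ⟨N, _, _, h3, _⟩ := Set.mem_iUnion.1 hN; exact h3
    · exact hInf.2
  obtain ⟨x₁, hx1⟩ : ∃ x, p 1 = Sum.inl x := by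
    cases h : p 1 with
    | inl y => exact ⟨y, rfl⟩
    | inr u => exact absurd (by rw [h]) hp1
  have hx1Δ : x₁ ∈ Δ := (hrec 0 x₁ hx1).1
  refine ⟨?_, x₁, hx1Δ, hx1⟩
  rcases hpX with hN | hInf
  · obtain ⟨N, h1, h2, h3, h4⟩ := Set.mem_iUnion.1 hN
    cases N with
    | zero => exact absurd (h2 1 Nat.one_pos) hp1
    | succ M =>
      refine Or.inl (Set.mem_iUnion.2 ⟨M, ?_, ?_, ?_, ?_⟩)
      · intro n hn
        obtain ⟨y, hy, hyd⟩ := h1 (n + 1) (by omega)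
        exact ⟨y, hy, pdsDom_succ_subset α Δ n hyd⟩
      · intro n hn
        exact h2 (n + 1) (by omega)
      · intro n y hy
        exact h3 (n + 1) y hy
      · intro y hy
        exact h4 y hy
  · obtain ⟨h1, h3⟩ := hInf
    refine Or.inr ⟨?_, ?_⟩
    · intro n
      obtain ⟨y, hy, hyd⟩ := h1 (n + 1)
      exact ⟨y, hy, pdsDom_succ_subset α Δ n hyd⟩
    · intro n y hy
      exact h3 (n + 1) y hy

lemma tShift_bShift {α : X → X} {Δ : Set X} {p : ℕ → X ⊕ Unit}
    (hp : p ∈ tDeltaM1 α Δ) : tShift α (bShift p) = p := by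
  obtain ⟨hpX, hp1⟩ := hp
  have hrec : ∀ n x, p (n + 1) = Sum.inl x → x ∈ Δ ∧ p n = Sum.inl (α x) := by
    rcases hpX with hN | hInf
    · obtain ⟨N, _, _, h3, _⟩ := Set.mem_iUnion.1 hN; exact h3
    · exact hInf.2
  obtain ⟨x₁, hx1⟩ : ∃ x, p 1 = Sum.inl x := by
    cases h : p 1 with
    | inl y => exact ⟨y, rfl⟩
    | inr u => exact absurd (by rw [h]) hp1
  funext n
  cases n with
  | zero =>
    show Sum.map α id (p 1) = p 0
    rw [hx1, (hrec 0 x₁ hx1).2]; rfl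
  | succ m => rfl

/-- If `Δ₋₁` is open, then `α̃(x₀, x₁, …) = (α x₀, x₀, x₁, …)` is a
homeomorphism of `Δ̃₁` onto `Δ̃₋₁`, with inverse the backwards shift,
and `Φ ∘ α̃ = α ∘ Φ` on `Δ̃₁`. -/
theorem tShift_partialHomeo {X : Type*} [TopologicalSpace X] [CompactSpace X]
    [T2Space X] (Δ : Set X) (hΔ : IsClopen Δ) (α : X → X) (hα : ContinuousOn α Δ)
    (hopen : IsOpen (α '' Δ)) :
    Set.BijOn (tShift α) (tDelta1 α Δ) (tDeltaM1 α Δ) ∧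
    ContinuousOn (tShift α) (tDelta1 α Δ) ∧
    ContinuousOn bShift (tDeltaM1 α Δ) ∧
    (∀ p ∈ tDelta1 α Δ, bShift (tShift α p) = p) ∧
    (∀ p ∈ tDeltaM1 α Δ, tShift α (bShift p) = p) ∧
    (∀ p ∈ tDelta1 α Δ, ∀ x, p 0 = Sum.inl x → tShift α p 0 = Sum.inl (α x)) := by
  have hbs : ∀ p, bShift (tShift α p) = p := fun p => funext fun n => rfl
  refine ⟨⟨fun p hp => tShift_mem_tDeltaM1 hp, ?_, ?_⟩, ?_, ?_, fun p _ => hbs p,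
    fun p hp => tShift_bShift hp, ?_⟩
  · intro p _ q _ hpq
    rw [← hbs p, ← hbs q, hpq]
  · intro p hp
    exact ⟨bShift p, bShift_mem_tDelta1 hp, tShift_bShift hp⟩
  · apply continuousOn_of_forall_continuousAt
    intro p hp
    obtain ⟨_, x, hxΔ, hp0⟩ := hp
    apply continuousAt_pi.2
    intro n
    cases n with
    | zero =>
      show ContinuousAt (fun q : ℕ → X ⊕ Unit => Sum.map α id (q 0)) p
      have hαx : ContinuousAt α x := hα.continuousAt (hΔ.isOpen.mem_nhds hxΔ)
      have hmap : ContinuousAt (Sum.map α id) (p 0) := by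
        rw [hp0]
        unfold ContinuousAt
        rw [nhds_inl, Filter.tendsto_map'_iff]
        have : (Sum.map α id ∘ Sum.inl : X → X ⊕ Unit) = Sum.inl ∘ α := rfl
        rw [this, Sum.map_inl]
        exact (continuous_inl.continuousAt).comp hαx
      exact ContinuousAt.comp (g := Sum.map α id)
        (f := fun q : ℕ → X ⊕ Unit => q 0) hmap (continuousAt_apply 0 p)
    | succ m =>
      exact (continuous_apply m).continuousAt
  · exact (continuous_pi fun n => continuous_apply (n + 1)).continuousOn
  · intro p hp x hx
    show Sum.map α id (p 0) = Sum.inl (α x)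
    rw [hx]; rfl
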